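/- Semi-discrete energy conservation for the acoustic scheme: let n, m : ℕ, let D : Matrix (Fin n) (Fin n) ℝ and M : Matrix (Fin m) (Fin m) ℝ be symmetric matrices and K : Matrix (Fin n) (Fin m) ℝ any matrix. Let v : ℝ → (Fin n → ℝ) and p : ℝ → (Fin m → ℝ) be functions with derivatives vd and pd (i.e., ∀ t, HasDerivAt v (vd t) t and HasDerivAt p (pd t) t), satisfying for all t: D *ᵥ (vd t) + K *ᵥ (p t) = 0 and M *ᵥ (pd t) − Kᵀ *ᵥ (v t) = 0. Then the total discrete energy is conserved: for every t, (v t) ⬝ᵥ (D *ᵥ v t) + (p t) ⬝ᵥ (M *ᵥ p t) = (v 0) ⬝ᵥ (D *ᵥ v 0) + (p 0) ⬝ᵥ (M *ᵥ p 0). -/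

import Mathlib

open Matrix

private lemma hasDerivAt_dot {n : ℕ} {u w : ℝ → Fin n → ℝ} {ud wd : Fin n → ℝ} {t : ℝ}
    (hu : HasDerivAt u ud t) (hw : HasDerivAt w wd t) :
    HasDerivAt (fun s => u s ⬝ᵥ w s) (ud ⬝ᵥ w t + u t ⬝ᵥ wd) t := by
  simp only [dotProduct]
  rw [← Finset.sum_add_distrib]
  exact HasDerivAt.fun_sum fun i _ =>
    ((hasDerivAt_pi.1 hu i).mul (hasDerivAt_pi.1 hw i))

private lemma hasDerivAt_mulVec {n m : ℕ} {A : Matrix (Fin n) (Fin m) ℝ}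
    {u : ℝ → Fin m → ℝ} {ud : Fin m → ℝ} {t : ℝ} (hu : HasDerivAt u ud t) :
    HasDerivAt (fun s => A *ᵥ u s) (A *ᵥ ud) t := by
  rw [hasDerivAt_pi]
  intro i
  simp only [mulVec, dotProduct]
  exact HasDerivAt.fun_sum fun j _ => (hasDerivAt_pi.1 hu j).const_mul (A i j)

/-- Semi-discrete energy conservation for the acoustic scheme. -/
theorem acoustic_semidiscrete_energy_conservation
    (n m : ℕ)
    (D : Matrix (Fin n) (Fin n) ℝ) (M : Matrix (Fin m) (Fin m) ℝ)
    (K : Matrix (Fin n) (Fin m) ℝ)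
    (hD : D.IsSymm) (hM : M.IsSymm)
    (v : ℝ → Fin n → ℝ) (p : ℝ → Fin m → ℝ)
    (vd : ℝ → Fin n → ℝ) (pd : ℝ → Fin m → ℝ)
    (hv : ∀ t : ℝ, HasDerivAt v (vd t) t) (hp : ∀ t : ℝ, HasDerivAt p (pd t) t)
    (h1 : ∀ t : ℝ, D *ᵥ vd t + K *ᵥ p t = 0)
    (h2 : ∀ t : ℝ, M *ᵥ pd t - Kᵀ *ᵥ v t = 0) :
    ∀ t : ℝ, v t ⬝ᵥ (D *ᵥ v t) + p t ⬝ᵥ (M *ᵥ p t) =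
      v 0 ⬝ᵥ (D *ᵥ v 0) + p 0 ⬝ᵥ (M *ᵥ p 0) := by
  intro t
  set E : ℝ → ℝ := fun s => v s ⬝ᵥ (D *ᵥ v s) + p s ⬝ᵥ (M *ᵥ p s) with hE
  have key : ∀ s : ℝ, HasDerivAt E 0 s := by
    intro s
    have hEv : HasDerivAt E
        ((vd s ⬝ᵥ (D *ᵥ v s) + v s ⬝ᵥ (D *ᵥ vd s)) +
         (pd s ⬝ᵥ (M *ᵥ p s) + p s ⬝ᵥ (M *ᵥ pd s))) s :=
      ((hasDerivAt_dot (hv s) (hasDerivAt_mulVec (hv s))).add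
        (hasDerivAt_dot (hp s) (hasDerivAt_mulVec (hp s))))
    have sym1 : vd s ⬝ᵥ (D *ᵥ v s) = v s ⬝ᵥ (D *ᵥ vd s) := by
      rw [dotProduct_comm, dotProduct_mulVec, ← Matrix.mulVec_transpose, hD]
    have sym2 : pd s ⬝ᵥ (M *ᵥ p s) = p s ⬝ᵥ (M *ᵥ pd s) := by
      rw [dotProduct_comm, dotProduct_mulVec, ← Matrix.mulVec_transpose, hM]
    have e1 : D *ᵥ vd s = -(K *ᵥ p s) := by
      have := h1 s; linear_combination (norm := module) this
    have e2 : M *ᵥ pd s = Kᵀ *ᵥ v s := by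
      have := h2 s; linear_combination (norm := module) this
    have cross : p s ⬝ᵥ (Kᵀ *ᵥ v s) = v s ⬝ᵥ (K *ᵥ p s) := by
      rw [dotProduct_comm, dotProduct_mulVec, ← Matrix.mulVec_transpose]
    have : (vd s ⬝ᵥ (D *ᵥ v s) + v s ⬝ᵥ (D *ᵥ vd s)) +
         (pd s ⬝ᵥ (M *ᵥ p s) + p s ⬝ᵥ (M *ᵥ pd s)) = 0 := by
      rw [sym1, sym2, e1, e2, cross, dotProduct_neg]
      ring
    rwa [this] at hEv
  have := is_const_of_deriv_eq_zero (f := E)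
    (fun s => (key s).differentiableAt) (fun s => (key s).deriv) t 0
  simpa [hE] using this
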